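/- arXiv:1401.5097 — 5 statements merged into one kernel-verified Lean document; each statement's English description precedes it below -/
import Mathlib

section
/- If R is a simulation between transition relations ⟶ and ⟶', the inverse of R is a presimulation from ⟶' to ⟶, and ⟶' is deterministic at every state b related by R to some a, then the inverse of R is a simulation from ⟶' to ⟶. -/
def Simulation {A B : Type*} (step : A → A → Prop) (step' : B → B → Prop)
    (R : A → B → Prop) : Prop :=
  ∀ a a' b, step a a' → R a b → ∃ b', step' b b' ∧ R a' b'

def Presimulation {A B : Type*} (step : A → A → Prop) (step' : B → B → Prop)
    (R : A → B → Prop) : Prop :=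
  ∀ a a' b, step a a' → R a b → ∃ b', step' b b'

def DeterministicAt {A : Type*} (step : A → A → Prop) (a : A) : Prop :=
  ∀ a₁ a₂, step a a₁ → step a a₂ → a₁ = a₂

theorem presimulation_to_simulation {A B : Type*}
    (step : A → A → Prop) (step' : B → B → Prop) (R : A → B → Prop)
    (hsim : Simulation step step' R)
    (hpre : Presimulation step' step (fun b a => R a b))
    (hdet : ∀ a b, R a b → DeterministicAt step' b) :
    Simulation step' step (fun b a => R a b) := by
  intro b b' a hb hR
  obtain ⟨a', ha⟩ := hpre b b' a hb hR
  obtain ⟨b'', hb'', hR''⟩ := hsim a a' b ha hR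
  exact ⟨a', ha, (hdet a b hR b' b'' hb hb'') ▸ hR''⟩
end

section
/- If R is a simulation between ⟶ and ⟶', the inverse of R is a presimulation, and ⟶' is deterministic at every state related to some source state, then R is a bisimulation (i.e., both R and R⁻¹ are simulations). -/
def Bisimulation {A B : Type*} (step : A → A → Prop) (step' : B → B → Prop)
    (R : A → B → Prop) : Prop :=
  Simulation step step' R ∧ Simulation step' step (fun b a => R a b)

theorem simulation_to_bisimulation {A B : Type*}
    (step : A → A → Prop) (step' : B → B → Prop) (R : A → B → Prop)
    (hsim : Simulation step step' R)
    (hpre : Presimulation step' step (fun b a => R a b))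
    (hdet : ∀ a b, R a b → DeterministicAt step' b) :
    Bisimulation step step' R := by
  refine ⟨hsim, ?_⟩
  intro b b' a hb hR
  obtain ⟨a', ha'⟩ := hpre b b' a hb hR
  obtain ⟨b'', hb'', hR''⟩ := hsim a a' b ha' hR
  exact ⟨a', ha', (hdet a b hR b' b'' hb hb'') ▸ hR''⟩
end

section
/- Any synchronous network step can be simulated by one or more asynchronous network steps between states with empty message lists: if nodes ⟶Sync nodes', then (nodes, []) ⟶Async⁺ (nodes', []). -/
inductive Tagged (M : Type) : Type where
  | silent : Tagged M
  | send : M → Tagged M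
  | receive : M → Tagged M

def detag {M : Type} : Tagged M → List M × List M
  | .silent => ([], [])
  | .send x => ([], [x])
  | .receive x => ([x], [])

def update {Node Machine : Type} [DecidableEq Node]
    (f : Node → Machine) (i : Node) (x : Machine) : Node → Machine :=
  fun j => if j = i then x else f j

/-- Synchronous network transitions: either a silent local step,
or a rendezvous of a send and a matching receive. -/
inductive SyncStep {Node Machine Msg : Type} [DecidableEq Node]
    (step : Node → Machine → Tagged Msg → Machine → Prop) :
    (Node → Machine) → (Node → Machine) → Prop where
  | silentStep {nodes : Node → Machine} {i : Node} {m' : Machine} :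
      step i (nodes i) .silent m' →
      SyncStep step nodes (update nodes i m')
  | commStep {nodes : Node → Machine} {s r : Node} {msg : Msg}
      {sender' receiver' : Machine} :
      step s (nodes s) (.send msg) sender' →
      step r (update nodes s sender' r) (.receive msg) receiver' →
      SyncStep step nodes (update (update nodes s sender') r receiver')

/-- Asynchronous network transitions: a node takes a local step whose
received messages are taken from, and sent messages added to, the message soup. -/
inductive AsyncStep {Node Machine Msg : Type} [DecidableEq Node]
    (step : Node → Machine → Tagged Msg → Machine → Prop) :
    (Node → Machine) × List Msg → (Node → Machine) × List Msg → Prop where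
  | step {nodes : Node → Machine} (msgsl msgsr : List Msg)
      {t : Tagged Msg} {m' : Machine} {i : Node} :
      step i (nodes i) t m' →
      AsyncStep step (nodes, msgsl ++ (detag t).1 ++ msgsr)
                     (update nodes i m', msgsl ++ (detag t).2 ++ msgsr)

theorem syncStep_to_asyncStep_plus {Node Machine Msg : Type} [DecidableEq Node]
    (step : Node → Machine → Tagged Msg → Machine → Prop)
    {nodes nodes' : Node → Machine}
    (h : SyncStep step nodes nodes') :
    Relation.TransGen (AsyncStep step) (nodes, ([] : List Msg)) (nodes', []) := by
  cases h with
  | silentStep hs =>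
      exact Relation.TransGen.single (by simpa [detag] using AsyncStep.step [] [] hs)
  | @commStep s r msg sender' receiver' hs hr =>
      refine Relation.TransGen.head (b := (update nodes s sender', [msg])) ?_
        (Relation.TransGen.single ?_)
      · simpa [detag] using AsyncStep.step [] [] hs
      · simpa [detag] using AsyncStep.step [] [] hr
end

section
/- For asynchronous networks over the DCESH local transition relation: if all nodes in nodes except one node i are inactive, and (nodes, []) ⟶Async⁺ (nodes', []), then nodes ⟶Sync⁺ nodes' (the transition can also be performed purely synchronously). -/
/-- A machine is inactive if its thread component is `none`. -/
def Inactive {Thread H : Type} (m : Option Thread × H) : Prop := m.1 = none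


lemma async_inv {Node Machine Msg : Type} [DecidableEq Node]
    {step : Node → Machine → Tagged Msg → Machine → Prop}
    {ns ns' : Node → Machine} {soup soup' : List Msg}
    (h : AsyncStep step (ns, soup) (ns', soup')) :
    ∃ (i : Node) (t : Tagged Msg) (m' : Machine) (msgsl msgsr : List Msg),
      step i (ns i) t m' ∧ soup = msgsl ++ (detag t).1 ++ msgsr ∧
      ns' = update ns i m' ∧ soup' = msgsl ++ (detag t).2 ++ msgsr := by
  cases h with
  | step msgsl msgsr hstep => exact ⟨_, _, _, msgsl, msgsr, hstep, rfl, rfl, rfl⟩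

lemma singleton_eq_append {Msg : Type} {msg msg' : Msg} {l r : List Msg}
    (h : ([msg] : List Msg) = l ++ [msg'] ++ r) : l = [] ∧ r = [] ∧ msg' = msg := by
  cases l with
  | nil =>
    cases r with
    | nil => simp_all
    | cons a tl =>
      exfalso
      have := congrArg List.length h
      simp at this
  | cons a tl =>
    exfalso
    have := congrArg List.length h
    simp at this

theorem asyncPlus_to_syncPlus {Node Thread H Msg : Type} [DecidableEq Node]
    (step : Node → (Option Thread × H) → Tagged Msg → (Option Thread × H) → Prop)
    -- (1) point-to-point: any message can be received by at most one node
    (hpt : ∀ (ms : Node → Option Thread × H) (msg : Msg) (i₁ i₂ : Node)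
      (m₁ m₂ : Option Thread × H),
      step i₁ (ms i₁) (.receive msg) m₁ → step i₂ (ms i₂) (.receive msg) m₂ → i₁ = i₂)
    -- (2) a node with no running thread cannot take a silent or send step
    (hNoSilent : ∀ (i : Node) (m m' : Option Thread × H),
      Inactive m → ¬ step i m .silent m')
    (hNoSend : ∀ (i : Node) (m : Option Thread × H) (msg : Msg) (m' : Option Thread × H),
      Inactive m → ¬ step i m (.send msg) m')
    -- (3) after a send step the sender's thread is stopped; a receive step can only be
    -- taken from an inactive state and results in an active state
    (hSendStops : ∀ (i : Node) (m : Option Thread × H) (msg : Msg) (m' : Option Thread × H),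
      step i m (.send msg) m' → Inactive m')
    (hReceive : ∀ (i : Node) (m : Option Thread × H) (msg : Msg) (m' : Option Thread × H),
      step i m (.receive msg) m' → Inactive m ∧ ¬ Inactive m')
    {nodes nodes' : Node → Option Thread × H} (i : Node)
    (hia : ∀ i', i' ≠ i → Inactive (nodes i'))
    (h : Relation.TransGen (AsyncStep step) (nodes, ([] : List Msg)) (nodes', [])) :
    Relation.TransGen (SyncStep step) nodes nodes' := by
  
  have main : ∀ p : (Node → Option Thread × H) × List Msg,
      Relation.TransGen (AsyncStep step) p (nodes', ([] : List Msg)) →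
      ((∀ ns, p = (ns, ([] : List Msg)) →
          (∃ j, ∀ i', i' ≠ j → Inactive (ns i')) →
          Relation.TransGen (SyncStep step) ns nodes') ∧
        (∀ ns msg, p = (ns, ([msg] : List Msg)) →
          (∀ i', Inactive (ns i')) →
          ∀ ns₀ s sender', step s (ns₀ s) (Tagged.send msg) sender' →
            ns = update ns₀ s sender' →
            Relation.TransGen (SyncStep step) ns₀ nodes')) := by
    intro p h
    induction h using Relation.TransGen.head_induction_on with
    | single hstep =>
      refine ⟨?_, ?_⟩
      · rintro ns rfl ⟨j, hj⟩
        obtain ⟨i₀, t, m', msgsl, msgsr, hst, hsoup, hns', hsoup'⟩ := async_inv hstep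
        cases t with
        | silent =>
          rw [hns']
          exact Relation.TransGen.single (SyncStep.silentStep hst)
        | send msg => exfalso; simp [detag] at hsoup'
        | receive msg => exfalso; simp [detag] at hsoup
      · rintro ns msg rfl hall ns₀ s sender' hsend rfl
        obtain ⟨r, t, m', msgsl, msgsr, hst, hsoup, hns', hsoup'⟩ := async_inv hstep
        cases t with
        | silent => exact absurd hst (hNoSilent _ _ _ (hall r))
        | send msg' => exact absurd hst (hNoSend _ _ _ _ (hall r))
        | receive msg' =>
          obtain ⟨rfl, rfl, rfl⟩ :=
            singleton_eq_append (show [msg] = msgsl ++ [msg'] ++ msgsr from hsoup)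
          rw [hns']
          exact Relation.TransGen.single (SyncStep.commStep hsend hst)
    | @head a c hstep h2 IH =>
      obtain ⟨ns₂, soup₂⟩ := c
      refine ⟨?_, ?_⟩
      · rintro ns rfl ⟨j, hj⟩
        obtain ⟨i₀, t, m', msgsl, msgsr, hst, hsoup, hns', hsoup'⟩ := async_inv hstep
        cases t with
        | silent =>
          have hi₀ : i₀ = j := by
            by_contra hne
            exact hNoSilent _ _ _ (hj i₀ hne) hst
          simp only [detag, List.append_nil, List.nil_eq, List.append_eq_nil_iff] at hsoup
          obtain ⟨rfl, rfl⟩ := hsoup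
          simp only [detag, List.append_nil, List.nil_append] at hsoup'
          subst hsoup' hns'
          refine Relation.TransGen.head (SyncStep.silentStep hst) (IH.1 _ rfl ⟨j, ?_⟩)
          intro i' hne
          subst hi₀
          simp only [Inactive, update, if_neg hne]
          exact hj i' hne
        | send msg =>
          have hi₀ : i₀ = j := by
            by_contra hne
            exact hNoSend _ _ _ _ (hj i₀ hne) hst
          simp only [detag, List.append_nil, List.nil_eq, List.append_eq_nil_iff] at hsoup
          obtain ⟨rfl, rfl⟩ := hsoup
          simp only [detag, List.append_nil, List.nil_append] at hsoup'
          subst hsoup' hns'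
          have hall : ∀ i', Inactive (update ns i₀ m' i') := by
            intro i'
            by_cases hc : i' = i₀
            · subst hc
              simp only [Inactive, update, if_pos rfl]
              exact hSendStops _ _ _ _ hst
            · simp only [Inactive, update, if_neg hc]
              exact hj i' (by rw [hi₀] at hc; exact hc)
          exact IH.2 _ msg rfl hall ns i₀ m' hst rfl
        | receive msg => exfalso; simp [detag] at hsoup
      · rintro ns msg rfl hall ns₀ s sender' hsend rfl
        obtain ⟨r, t, m', msgsl, msgsr, hst, hsoup, hns', hsoup'⟩ := async_inv hstep
        cases t with
        | silent => exact absurd hst (hNoSilent _ _ _ (hall r))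
        | send msg' => exact absurd hst (hNoSend _ _ _ _ (hall r))
        | receive msg' =>
          obtain ⟨rfl, rfl, rfl⟩ :=
            singleton_eq_append (show [msg] = msgsl ++ [msg'] ++ msgsr from hsoup)
          simp only [detag, List.append_nil, List.nil_append] at hsoup'
          subst hsoup' hns'
          refine Relation.TransGen.head (SyncStep.commStep hsend hst) (IH.1 _ rfl ⟨r, ?_⟩)
          intro i' hne
          simp only [Inactive, update, if_neg hne]
          exact hall i'
  exact (main _ h).1 nodes rfl ⟨i, hia⟩
end

section
/- If all nodes in a synchronous network except one node i are inactive, then the synchronous network transition relation is deterministic at that network: any two successor networks are equal. -/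
theorem determinism_Sync {Node Thread H Msg : Type} [DecidableEq Node]
    (step : Node → (Option Thread × H) → Tagged Msg → (Option Thread × H) → Prop)
    -- (a) the silent transition relation at each node is deterministic
    (hSilentDet : ∀ (i : Node) (m m₁ m₂ : Option Thread × H),
      step i m .silent m₁ → step i m .silent m₂ → m₁ = m₂)
    -- (b) the combined send relation (message and new machine) is deterministic
    (hSendDet : ∀ (i : Node) (m : Option Thread × H) (msg₁ msg₂ : Msg)
      (m₁ m₂ : Option Thread × H),
      step i m (.send msg₁) m₁ → step i m (.send msg₂) m₂ → msg₁ = msg₂ ∧ m₁ = m₂)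
    -- (c) for each fixed message, the receive relation is deterministic
    (hReceiveDet : ∀ (i : Node) (m : Option Thread × H) (msg : Msg)
      (m₁ m₂ : Option Thread × H),
      step i m (.receive msg) m₁ → step i m (.receive msg) m₂ → m₁ = m₂)
    -- (d) no machine can take both a send and a silent step
    (hNoSendSilent : ∀ (i : Node) (m : Option Thread × H) (msg : Msg)
      (m₁ m₂ : Option Thread × H),
      step i m (.send msg) m₁ → step i m .silent m₂ → False)
    -- (e) sends and silents only from active machines, receives only from inactive ones
    (hSendActive : ∀ (i : Node) (m : Option Thread × H) (msg : Msg)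
      (m' : Option Thread × H), step i m (.send msg) m' → ¬ Inactive m)
    (hSilentActive : ∀ (i : Node) (m m' : Option Thread × H),
      step i m .silent m' → ¬ Inactive m)
    (hReceiveInactive : ∀ (i : Node) (m : Option Thread × H) (msg : Msg)
      (m' : Option Thread × H), step i m (.receive msg) m' → Inactive m)
    -- (f) point-to-point: if two nodes can receive the same message they are equal
    (hpt : ∀ (ms : Node → Option Thread × H) (msg : Msg) (i₁ i₂ : Node)
      (m₁ m₂ : Option Thread × H),
      step i₁ (ms i₁) (.receive msg) m₁ → step i₂ (ms i₂) (.receive msg) m₂ → i₁ = i₂)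
    (nodes : Node → Option Thread × H) (i : Node)
    (hia : ∀ i', i' ≠ i → Inactive (nodes i'))
    {nodes₁ nodes₂ : Node → Option Thread × H}
    (h₁ : SyncStep step nodes nodes₁) (h₂ : SyncStep step nodes nodes₂) :
    nodes₁ = nodes₂ := by
  have hactive : ∀ j (t : Tagged Msg) m', step j (nodes j) t m' →
      (t matches .receive _) = false → j = i := by
    intro j t m' hst hnr
    by_contra hji
    have hin := hia j hji
    cases t with
    | silent => exact hSilentActive j _ _ hst hin
    | send msg => exact hSendActive j _ msg _ hst hin
    | receive msg => simp at hnr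
  cases h₁ with
  | @silentStep j₁ m₁ hs₁ =>
    cases h₂ with
    | @silentStep j₂ m₂ hs₂ =>
      have hj : j₂ = j₁ := (hactive j₂ _ _ hs₂ rfl).trans (hactive j₁ _ _ hs₁ rfl).symm
      subst hj
      rw [hSilentDet j₂ _ _ _ hs₁ hs₂]
    | @commStep s r msg sd rc hsend hrecv =>
      have hj : s = j₁ := (hactive s _ _ hsend rfl).trans (hactive j₁ _ _ hs₁ rfl).symm
      subst hj
      exact absurd hs₁ (fun h => hNoSendSilent s _ _ _ _ hsend h)
  | @commStep s₁ r₁ msg₁ sd₁ rc₁ hsend₁ hrecv₁ =>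
    cases h₂ with
    | @silentStep j₂ m₂ hs₂ =>
      have hj : s₁ = j₂ := (hactive s₁ _ _ hsend₁ rfl).trans (hactive j₂ _ _ hs₂ rfl).symm
      subst hj
      exact absurd hs₂ (fun h => hNoSendSilent s₁ _ _ _ _ hsend₁ h)
    | @commStep s₂ r₂ msg₂ sd₂ rc₂ hsend₂ hrecv₂ =>
      have hs : s₂ = s₁ := (hactive s₂ _ _ hsend₂ rfl).trans (hactive s₁ _ _ hsend₁ rfl).symm
      subst hs
      obtain ⟨hmsg, hsd⟩ := hSendDet s₂ _ _ _ _ _ hsend₁ hsend₂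
      subst hmsg; subst hsd
      have hr : r₁ = r₂ := hpt (update nodes s₂ sd₁) msg₁ r₁ r₂ _ _ hrecv₁ hrecv₂
      subst hr
      rw [hReceiveDet r₁ _ _ _ _ hrecv₁ hrecv₂]
end
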